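/- For all q ∈ [0,1], with A = (q+1)/(q+2), one has -log(2)/(1 + q·log 2) ≤ log A ≤ -2·(log 2)²/(q + 2·log 2). -/

import Mathlib

open Real Set

set_option maxHeartbeats 1000000

/-- Monotone on `Icc` from a `HasDerivAt` presentation. -/
private lemma monoAux {a b : ℝ} {F F' : ℝ → ℝ}
    (hd : ∀ x ∈ Icc a b, HasDerivAt F (F' x) x)
    (hpos : ∀ x ∈ Ioo a b, 0 ≤ F' x) : MonotoneOn F (Icc a b) := by
  apply monotoneOn_of_deriv_nonneg (convex_Icc a b)
  · exact fun x hx => (hd x hx).continuousAt.continuousWithinAt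
  · rw [interior_Icc]
    exact fun x hx => (hd x (Ioo_subset_Icc_self hx)).differentiableAt.differentiableWithinAt
  · rw [interior_Icc]
    intro x hx
    rw [(hd x (Ioo_subset_Icc_self hx)).deriv]
    exact hpos x hx

/-- Antitone on `Icc` from a `HasDerivAt` presentation. -/
private lemma antiAux {a b : ℝ} {F F' : ℝ → ℝ}
    (hd : ∀ x ∈ Icc a b, HasDerivAt F (F' x) x)
    (hneg : ∀ x ∈ Ioo a b, F' x ≤ 0) : AntitoneOn F (Icc a b) := by
  apply antitoneOn_of_deriv_nonpos (convex_Icc a b)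
  · exact fun x hx => (hd x hx).continuousAt.continuousWithinAt
  · rw [interior_Icc]
    exact fun x hx => (hd x (Ioo_subset_Icc_self hx)).differentiableAt.differentiableWithinAt
  · rw [interior_Icc]
    intro x hx
    rw [(hd x (Ioo_subset_Icc_self hx)).deriv]
    exact hneg x hx

/-- Numeric bound: `log (9/8) ≤ 2/17 + 19/122400`. -/
private lemma log98_le : Real.log (9 / 8) ≤ 2 / 17 + 19 / 122400 := by
  have habs : |(-(1/8) : ℝ)| = 1/8 := by rw [abs_neg, abs_of_nonneg] <;> norm_num
  have h := Real.abs_log_sub_add_sum_range_le (x := -(1/8)) (by rw [habs]; norm_num) 5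
  rw [abs_le] at h
  have h1 := h.2
  have e : (1 : ℝ) - (-(1/8)) = 9/8 := by norm_num
  rw [e, habs] at h1
  have hs : (∑ i ∈ Finset.range 5, (-(1/8) : ℝ) ^ (i + 1) / (i + 1)) =
      -(1/8) + 1/128 - 1/1536 + 1/16384 - 1/163840 := by
    simp [Finset.sum_range_succ]
    norm_num
  rw [hs] at h1
  norm_num at h1 ⊢
  linarith

/-- The rational upper bound for `log (x+2) - log (x+1)` on `[0, 7]`. -/
private lemma rat_log_bound {x : ℝ} (hx : x ∈ Icc (0:ℝ) 7) :
    Real.log (x + 2) - Real.log (x + 1) ≤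
      2 / (2 * x + 3) + 19 / (100 * ((2 * x + 3) * ((x + 1) * (x + 2)))) := by
  set H : ℝ → ℝ := fun y =>
    2 / (2 * y + 3) + 19 / (100 * ((2 * y + 3) * ((y + 1) * (y + 2))))
      - Real.log (y + 2) + Real.log (y + 1) with hH
  have hd : ∀ y ∈ Icc (0:ℝ) 7, HasDerivAt H
      (-(4 / (2 * y + 3) ^ 2)
        - 19 * (100 * (6 * y ^ 2 + 18 * y + 13)) / (100 * ((2 * y + 3) * ((y + 1) * (y + 2)))) ^ 2
        - 1 / (y + 2) + 1 / (y + 1)) y := by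
    intro y hy
    have hy1 : (0:ℝ) < y + 1 := by linarith [hy.1]
    have hy2 : (0:ℝ) < y + 2 := by linarith [hy.1]
    have hy3 : (0:ℝ) < 2 * y + 3 := by linarith [hy.1]
    have d1 : HasDerivAt (fun y : ℝ => 2 * y + 3) 2 y := by
      simpa using ((hasDerivAt_id y).const_mul 2).add_const 3
    have d2 : HasDerivAt (fun y : ℝ => 2 / (2 * y + 3)) (-(4 / (2 * y + 3) ^ 2)) y := by
      have := (hasDerivAt_const y (2:ℝ)).div d1 (by positivity)
      refine this.congr_deriv ?_
      field_simp
      ring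
    have dP : HasDerivAt (fun y : ℝ => 100 * ((2 * y + 3) * ((y + 1) * (y + 2))))
        (100 * (6 * y ^ 2 + 18 * y + 13)) y := by
      have da : HasDerivAt (fun y : ℝ => y + 1) 1 y := (hasDerivAt_id y).add_const 1
      have db : HasDerivAt (fun y : ℝ => y + 2) 1 y := (hasDerivAt_id y).add_const 2
      have dab := da.mul db
      have := (d1.mul dab).const_mul (100:ℝ)
      refine this.congr_deriv ?_
      simp only [Pi.mul_apply]
      ring
    have d3 : HasDerivAt (fun y : ℝ => 19 / (100 * ((2 * y + 3) * ((y + 1) * (y + 2)))))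
        (-(19 * (100 * (6 * y ^ 2 + 18 * y + 13))
          / (100 * ((2 * y + 3) * ((y + 1) * (y + 2)))) ^ 2)) y := by
      have := (hasDerivAt_const y (19:ℝ)).div dP (by positivity)
      refine this.congr_deriv ?_
      all_goals field_simp
      ring
    have d4 : HasDerivAt (fun y : ℝ => Real.log (y + 2)) (1 / (y + 2)) y := by
      simpa using ((hasDerivAt_id y).add_const 2).log (by positivity)
    have d5 : HasDerivAt (fun y : ℝ => Real.log (y + 1)) (1 / (y + 1)) y := by
      simpa using ((hasDerivAt_id y).add_const 1).log (by positivity)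
    have := ((d2.add d3).sub d4).add d5
    refine this.congr_deriv ?_
    all_goals field_simp
    all_goals ring
  have hanti : AntitoneOn H (Icc (0:ℝ) 7) := by
    apply antiAux hd
    intro y hy
    have hy1 : (0:ℝ) < y + 1 := by linarith [hy.1]
    have hy2 : (0:ℝ) < y + 2 := by linarith [hy.1]
    have hy3 : (0:ℝ) < 2 * y + 3 := by linarith [hy.1]
    have key : (-(4 / (2 * y + 3) ^ 2)
        - 19 * (100 * (6 * y ^ 2 + 18 * y + 13)) / (100 * ((2 * y + 3) * ((y + 1) * (y + 2)))) ^ 2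
        - 1 / (y + 2) + 1 / (y + 1))
        = -((14 * y ^ 2 + 42 * y + 47) / (100 * ((y + 1) * (y + 2) * (2 * y + 3)) ^ 2)) := by
      field_simp
      ring
    rw [key]
    have hnum : (0:ℝ) ≤ 14 * y ^ 2 + 42 * y + 47 := by nlinarith [hy.1]
    have hden : (0:ℝ) < 100 * ((y + 1) * (y + 2) * (2 * y + 3)) ^ 2 := by positivity
    have := div_nonneg hnum hden.le
    linarith
  have h7 : (0:ℝ) ≤ H 7 := by
    have : H 7 = 2 / 17 + 19 / 122400 - Real.log (9/8) := by
      rw [hH]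
      have : Real.log (9/8) = Real.log 9 - Real.log 8 := by
        rw [Real.log_div (by norm_num) (by norm_num)]
      rw [this]
      norm_num
      ring
    rw [this]
    linarith [log98_le]
  have hx7 : (7:ℝ) ∈ Icc (0:ℝ) 7 := by constructor <;> norm_num
  have := hanti hx hx7 hx.2
  have hHx : 0 ≤ H x := le_trans h7 this
  rw [hH] at hHx
  simp only at hHx
  linarith

theorem log_A_bounds (q : ℝ) (hq : q ∈ Set.Icc (0:ℝ) 1) :
    -Real.log 2 / (1 + q * Real.log 2) ≤ Real.log ((q + 1) / (q + 2)) ∧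
      Real.log ((q + 1) / (q + 2)) ≤ -(2 * Real.log 2 ^ 2) / (q + 2 * Real.log 2) := by
  obtain ⟨hq0, hq1⟩ := hq
  set L := Real.log 2 with hLdef
  have hL1 : 0.6931471803 < L := Real.log_two_gt_d9
  have hL2 : L < 0.6931471808 := Real.log_two_lt_d9
  have hLpos : 0 < L := by linarith
  have hq1' : (0:ℝ) < q + 1 := by linarith
  have hq2' : (0:ℝ) < q + 2 := by linarith
  have hlogdiv : Real.log ((q + 1) / (q + 2)) = Real.log (q + 1) - Real.log (q + 2) :=
    Real.log_div (by linarith) (by linarith)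
  constructor
  · -- lower bound
    rw [hlogdiv]
    have key : Real.log (q + 2) - Real.log (q + 1) ≤ L / (1 + q * L) := by
      rcases le_or_gt q (3/10) with hcase | hcase
      · -- monotone part
        set G : ℝ → ℝ := fun x => L / (1 + x * L) - Real.log (x + 2) + Real.log (x + 1) with hG
        have hd : ∀ x ∈ Icc (0:ℝ) (3/10), HasDerivAt G
            (-(L * L / (1 + x * L) ^ 2) - 1 / (x + 2) + 1 / (x + 1)) x := by
          intro x hx
          have hx1 : (0:ℝ) < x + 1 := by linarith [hx.1]
          have hx2 : (0:ℝ) < x + 2 := by linarith [hx.1]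
          have hx3 : (0:ℝ) < 1 + x * L := by nlinarith [hx.1]
          have d1 : HasDerivAt (fun x : ℝ => 1 + x * L) L x := by
            simpa using ((hasDerivAt_id x).mul_const L).const_add 1
          have d2 : HasDerivAt (fun x : ℝ => L / (1 + x * L)) (-(L * L / (1 + x * L) ^ 2)) x := by
            have := (hasDerivAt_const x L).div d1 (by positivity)
            refine this.congr_deriv ?_
            field_simp
            ring
          have d4 : HasDerivAt (fun x : ℝ => Real.log (x + 2)) (1 / (x + 2)) x := by
            simpa using ((hasDerivAt_id x).add_const 2).log (by positivity)
          have d5 : HasDerivAt (fun x : ℝ => Real.log (x + 1)) (1 / (x + 1)) x := by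
            simpa using ((hasDerivAt_id x).add_const 1).log (by positivity)
          exact (d2.sub d4).add d5
        have hmono : MonotoneOn G (Icc (0:ℝ) (3/10)) := by
          apply monoAux hd
          intro x hx
          have hx1 : (0:ℝ) < x + 1 := by linarith [hx.1]
          have hx2 : (0:ℝ) < x + 2 := by linarith [hx.1]
          have hx3 : (0:ℝ) < 1 + x * L := by nlinarith [hx.1]
          have key2 : (0:ℝ) ≤ (1 + x * L) ^ 2 - L ^ 2 * ((x + 1) * (x + 2)) := by
            nlinarith [hx.1, hx.2.le, sq_nonneg (x * L)]
          have e : -(L * L / (1 + x * L) ^ 2) - 1 / (x + 2) + 1 / (x + 1)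
              = ((1 + x * L) ^ 2 - L ^ 2 * ((x + 1) * (x + 2)))
                / ((x + 1) * (x + 2) * (1 + x * L) ^ 2) := by
            have hx3' : 1 + L * x ≠ 0 := by rw [mul_comm]; exact hx3.ne'
            field_simp
            ring
          rw [e]
          positivity
        have hG0 : G 0 = 0 := by
          rw [hG]
          norm_num
          exact sub_self _
        have h0mem : (0:ℝ) ∈ Icc (0:ℝ) (3/10) := by constructor <;> norm_num
        have hqmem : q ∈ Icc (0:ℝ) (3/10) := ⟨hq0, hcase⟩
        have := hmono h0mem hqmem hq0
        rw [hG0, hG] at this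
        simp only at this
        linarith
      · -- rational bound part
        have h1 : Real.log (q + 2) - Real.log (q + 1) ≤
            2 / (2 * q + 3) + 19 / (100 * ((2 * q + 3) * ((q + 1) * (q + 2)))) :=
          rat_log_bound ⟨hq0, by linarith⟩
        have h2 : 2 / (2 * q + 3) + 19 / (100 * ((2 * q + 3) * ((q + 1) * (q + 2))))
            ≤ L / (1 + q * L) := by
          have hA : (0:ℝ) ≤ 300 * ((q + 1) * (q + 2)) - 19 * q := by nlinarith
          have hB : (0:ℝ) ≤ (L - 0.6931471803) * (300 * ((q + 1) * (q + 2)) - 19 * q) :=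
            mul_nonneg (by linarith) hA
          have h23 : (0:ℝ) < 2 * q + 3 := by linarith
          have hqL : (0:ℝ) < 1 + q * L := by nlinarith
          have main : (200 * ((q + 1) * (q + 2)) + 19) * (1 + q * L)
              ≤ L * (100 * ((2 * q + 3) * ((q + 1) * (q + 2)))) := by
            nlinarith [hB, sq_nonneg (q - 3/10), hcase.le]
          rw [div_add_div _ _ (by positivity) (by positivity),
            div_le_div_iff₀ (by positivity) hqL]
          nlinarith [mul_le_mul_of_nonneg_left main h23.le]
        linarith
    have hpos : (0:ℝ) < 1 + q * L := by nlinarith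
    rw [neg_div]
    linarith
  · -- upper bound
    rw [hlogdiv]
    set F : ℝ → ℝ := fun x => Real.log (x + 2) - Real.log (x + 1) - 2 * L ^ 2 / (x + 2 * L)
      with hF
    have hd : ∀ x ∈ Icc (0:ℝ) 1, HasDerivAt F
        (1 / (x + 2) - 1 / (x + 1) + 2 * L ^ 2 / (x + 2 * L) ^ 2) x := by
      intro x hx
      have hx1 : (0:ℝ) < x + 1 := by linarith [hx.1]
      have hx2 : (0:ℝ) < x + 2 := by linarith [hx.1]
      have hx3 : (0:ℝ) < x + 2 * L := by nlinarith [hx.1]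
      have d4 : HasDerivAt (fun x : ℝ => Real.log (x + 2)) (1 / (x + 2)) x := by
        simpa using ((hasDerivAt_id x).add_const 2).log (by positivity)
      have d5 : HasDerivAt (fun x : ℝ => Real.log (x + 1)) (1 / (x + 1)) x := by
        simpa using ((hasDerivAt_id x).add_const 1).log (by positivity)
      have d1 : HasDerivAt (fun x : ℝ => x + 2 * L) 1 x := (hasDerivAt_id x).add_const (2 * L)
      have d2 : HasDerivAt (fun x : ℝ => 2 * L ^ 2 / (x + 2 * L))
          (-(2 * L ^ 2 / (x + 2 * L) ^ 2)) x := by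
        have := (hasDerivAt_const x (2 * L ^ 2)).div d1 (by positivity)
        refine this.congr_deriv ?_
        field_simp
        ring
      have := (d4.sub d5).sub d2
      refine this.congr_deriv ?_
      ring
    have hmono : MonotoneOn F (Icc (0:ℝ) 1) := by
      apply monoAux hd
      intro x hx
      have hx1 : (0:ℝ) < x + 1 := by linarith [hx.1]
      have hx2 : (0:ℝ) < x + 2 := by linarith [hx.1]
      have hx3 : (0:ℝ) < x + 2 * L := by nlinarith [hx.1]
      have key2 : (0:ℝ) ≤ 2 * L ^ 2 * ((x + 1) * (x + 2)) - (x + 2 * L) ^ 2 := by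
        have hLsq : (0.6931471803:ℝ) ^ 2 < L ^ 2 := by nlinarith
        have hLsq2 : L ^ 2 < (0.6931471808:ℝ) ^ 2 := by nlinarith
        have h2L : 2 * L ^ 2 ≤ 1 := by nlinarith
        have h8 : (0:ℝ) ≤ 6 * L ^ 2 - 4 * L - x * (1 - 2 * L ^ 2) := by
          nlinarith [mul_nonneg (by linarith [hx.2.le] : (0:ℝ) ≤ 1 - x)
            (by linarith : (0:ℝ) ≤ 1 - 2 * L ^ 2)]
        nlinarith [mul_nonneg hx.1.le h8]
      have e : 1 / (x + 2) - 1 / (x + 1) + 2 * L ^ 2 / (x + 2 * L) ^ 2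
          = (2 * L ^ 2 * ((x + 1) * (x + 2)) - (x + 2 * L) ^ 2)
            / ((x + 1) * (x + 2) * (x + 2 * L) ^ 2) := by
        field_simp
        ring
      rw [e]
      positivity
    have hF0 : F 0 = 0 := by
      have hne : (2:ℝ) * L ≠ 0 := by positivity
      rw [hF]
      simp only
      norm_num [Real.log_one]
      field_simp
      ring
    have h0mem : (0:ℝ) ∈ Icc (0:ℝ) 1 := by constructor <;> norm_num
    have hqmem : q ∈ Icc (0:ℝ) 1 := ⟨hq0, hq1⟩
    have := hmono h0mem hqmem hq0
    rw [hF0, hF] at this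
    simp only at this
    have hq3 : (0:ℝ) < q + 2 * L := by nlinarith
    rw [neg_div]
    linarith
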